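/- For p : ℕ, let A_p be the linear quiver on Fin (p+1) having, for each i : Fin p, exactly one arrow from i.castSucc to i.succ, and no other arrows. Then the canonical functor from the free category Paths A_p to the preorder category on Fin (p+1), sending each generating arrow to the unique morphism witnessing i.castSucc ≤ i.succ, is bijective on objects and fully faithful; in particular it is an equivalence of categories. (The simplex category is the full subcategory of Cat on the free categories of finite nonempty linearly-directed graphs.) -/

import Mathlib

open CategoryTheory

/-- The linear quiver on `Fin (p+1)`: one arrow `i.castSucc ⟶ i.succ` for each `i : Fin p`,
and no other arrows. -/
def LinQ (p : ℕ) : Type := Fin (p + 1)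

instance (p : ℕ) : Quiver (LinQ p) :=
  ⟨fun a b => { i : Fin p // a = i.castSucc ∧ b = i.succ }⟩

/-- The canonical functor from the free category on the linear quiver to the preorder category
on `Fin (p+1)`, sending each generating arrow to the unique morphism witnessing
`i.castSucc ≤ i.succ`. -/
def linQToFin (p : ℕ) : Paths (LinQ p) ⥤ Fin (p + 1) :=
  Paths.lift
    { obj := fun a => (a : Fin (p + 1))
      map := fun {a b} e => homOfLE (by
        obtain ⟨i, ha, hb⟩ := e
        subst ha; subst hb
        exact (Fin.castSucc_lt_succ (i := i)).le) }

instance linQ_hom_subsingleton {p : ℕ} (a b : LinQ p) : Subsingleton (a ⟶ b) :=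
  ⟨fun g h => Subtype.ext (Fin.succ_injective _ (g.2.2.symm.trans h.2.2))⟩

lemma linQ_val_add_length {p : ℕ} {a b : LinQ p} (e : Quiver.Path a b) :
    (a : Fin (p + 1)).val + e.length = (b : Fin (p + 1)).val := by
  induction e with
  | nil => simp
  | cons e' g ih =>
    obtain ⟨i, hc, hb⟩ := g
    subst hc; subst hb
    simp only [Fin.coe_castSucc] at ih
    simp only [Quiver.Path.length_cons, Fin.val_succ]
    show _ + (e'.length + 1) = _
    omega

lemma linQ_path_unique {p : ℕ} {a b : LinQ p} (e f : Quiver.Path a b) : e = f := by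
  induction e with
  | nil =>
    cases f with
    | nil => rfl
    | cons f' g =>
      have h1 := linQ_val_add_length (Quiver.Path.nil : Quiver.Path a a)
      have h2 := linQ_val_add_length (f'.cons g)
      simp only [Quiver.Path.length_nil, Quiver.Path.length_cons] at h1 h2
      omega
  | cons e' g ih =>
    cases f with
    | nil =>
      have h1 := linQ_val_add_length (Quiver.Path.nil : Quiver.Path a a)
      have h2 := linQ_val_add_length (e'.cons g)
      simp only [Quiver.Path.length_nil, Quiver.Path.length_cons] at h1 h2
      omega
    | @cons c _ f' h =>
      have hcc : (g.1 : Fin p) = h.1 := Fin.succ_injective _ (g.2.2.symm.trans h.2.2)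
      have hc2 : c = _ := h.2.1
      have hc1 := g.2.1
      have hcb : c = _ := hc2.trans (by rw [← hcc, ← hc1])
      subst hcb
      rw [ih f', Subsingleton.elim g h]

lemma linQ_path_exists_aux {p : ℕ} (n : ℕ) :
    ∀ a b : LinQ p, (b : Fin (p + 1)).val = (a : Fin (p + 1)).val + n →
      Nonempty (Quiver.Path a b) := by
  induction n with
  | zero =>
    intro a b hb
    have : a = b := Fin.ext (by omega)
    subst this
    exact ⟨Quiver.Path.nil⟩
  | succ n ih =>
    intro a b hb
    have hb1 : 1 ≤ (b : Fin (p + 1)).val := by omega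
    have hbp : (b : Fin (p + 1)).val ≤ p := by
      have := (b : Fin (p + 1)).isLt; omega
    set j : Fin p := ⟨(b : Fin (p + 1)).val - 1, by omega⟩ with hj
    have hbj : b = (j.succ : Fin (p + 1)) := Fin.ext (by simp [hj]; omega)
    have hcj : ((j.castSucc : Fin (p + 1)) : Fin (p + 1)).val
        = (a : Fin (p + 1)).val + n := by simp [hj]; omega
    obtain ⟨e⟩ := ih a (j.castSucc : Fin (p + 1)) hcj
    exact ⟨e.cons ⟨j, rfl, hbj⟩⟩

lemma linQ_path_exists {p : ℕ} (a b : LinQ p) (h : @LE.le (Fin (p + 1)) _ a b) :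
    Nonempty (Quiver.Path a b) :=
  linQ_path_exists_aux ((b : Fin (p + 1)).val - (a : Fin (p + 1)).val) a b
    (by have : (a : Fin (p+1)).val ≤ (b : Fin (p+1)).val := h; omega)

/-- The canonical functor from the free category on the linear quiver with
`p+1` vertices to the preorder category on `Fin (p+1)` is bijective on objects and fully
faithful; in particular it is an equivalence of categories. -/
theorem stmt_3 (p : ℕ) :
    Function.Bijective (linQToFin p).obj ∧
    (linQToFin p).Full ∧ (linQToFin p).Faithful ∧ (linQToFin p).IsEquivalence := by
  have hbij : Function.Bijective (linQToFin p).obj := Function.bijective_id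
  have hfull : (linQToFin p).Full := ⟨fun {a b} f => by
    obtain ⟨e⟩ := linQ_path_exists (p := p) a b (leOfHom f)
    exact ⟨e, Subsingleton.elim _ _⟩⟩
  have hfaith : (linQToFin p).Faithful := ⟨fun {a b} e f _ => linQ_path_unique e f⟩
  have hes : (linQToFin p).EssSurj := ⟨fun b => ⟨b, ⟨Iso.refl _⟩⟩⟩
  exact ⟨hbij, hfull, hfaith, { }⟩
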